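/- For every integer t ≥ 3 there exists a function f : ℕ → ℕ with the following property: for every finite simple graph G = (V, E) that is K_{3,t}-forbidden and every two independent sets I_0 and I_r of G with |I_0| = |I_r| = k that admit a token-jumping reconfiguration sequence in G, there exists a vertex set V' with I_0 ∪ I_r ⊆ V' ⊆ V and |V'| ≤ f(k) such that the minimum length of a token-jumping reconfiguration sequence from I_0 to I_r in the subgraph of G induced on V' equals the minimum length of a token-jumping reconfiguration sequence from I_0 to I_r in G. -/

import Mathlib

/-- `I` is an independent set of `G` (as a finset of vertices). -/
def IsIndepFinset {V : Type*} (G : SimpleGraph V) (I : Finset V) : Prop :=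
  ∀ u ∈ I, ∀ v ∈ I, ¬ G.Adj u v

/-- One token jump: exactly one token moves from `u ∈ I` to `v ∉ I`. -/
def TJStep {V : Type*} [DecidableEq V] (I J : Finset V) : Prop :=
  ∃ u v, u ∈ I ∧ v ∉ I ∧ I \ J = {u} ∧ J \ I = {v}

/-- `f 0, f 1, …, f ℓ` is a token-jumping reconfiguration sequence from `I` to `J`
in `G`, all of whose members are independent sets of cardinality `k`. -/
def TJSeq {V : Type*} [DecidableEq V] (G : SimpleGraph V) (k : ℕ)
    (I J : Finset V) (ℓ : ℕ) (f : ℕ → Finset V) : Prop :=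
  f 0 = I ∧ f ℓ = J ∧
  (∀ i ≤ ℓ, IsIndepFinset G (f i) ∧ (f i).card = k) ∧
  (∀ i < ℓ, TJStep (f i) (f (i + 1)))

/-- There is a token-jumping reconfiguration sequence from `I` to `J` in `G`. -/
def TJReachable {V : Type*} [DecidableEq V] (G : SimpleGraph V) (k : ℕ)
    (I J : Finset V) : Prop :=
  ∃ ℓ f, TJSeq G k I J ℓ f

/-- There is a token-jumping reconfiguration sequence from `I` to `J` in the
subgraph of `G` induced on the vertex set `W` (equivalently: a sequence in `G`
all of whose members are contained in `W`). -/
def TJReachableWithin {V : Type*} [DecidableEq V] (G : SimpleGraph V) (k : ℕ)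
    (I J : Finset V) (W : Finset V) : Prop :=
  ∃ ℓ f, TJSeq G k I J ℓ f ∧ ∀ i ≤ ℓ, f i ⊆ W

/-- `G` contains the complete bipartite graph `K_{p,q}` as a subgraph. -/
def ContainsKpq {V : Type*} (G : SimpleGraph V) (p q : ℕ) : Prop :=
  ∃ X Y : Finset V, Disjoint X Y ∧ X.card = p ∧ Y.card = q ∧
    ∀ x ∈ X, ∀ y ∈ Y, G.Adj x y

set_option linter.unusedSectionVars false
section Basic
variable {V : Type*} [DecidableEq V] {G : SimpleGraph V} {k : ℕ}

lemma indep_subset {I J : Finset V} (h : IsIndepFinset G J) (hIJ : I ⊆ J) :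
    IsIndepFinset G I := fun u hu v hv => h u (hIJ hu) v (hIJ hv)

lemma tjstep_symm {I J : Finset V} (h : TJStep I J) : TJStep J I := by
  obtain ⟨u, v, hu, hv, h1, h2⟩ := h
  refine ⟨v, u, ?_, ?_, h2, h1⟩
  · have : v ∈ J \ I := h2 ▸ Finset.mem_singleton_self v
    exact (Finset.mem_sdiff.1 this).1
  · have : u ∈ I \ J := h1 ▸ Finset.mem_singleton_self u
    exact (Finset.mem_sdiff.1 this).2

lemma tjstep_subset {I J : Finset V} (h : TJStep I J) : ∃ v, J ⊆ insert v I := by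
  obtain ⟨u, v, _, _, _, h2⟩ := h
  refine ⟨v, fun x hx => ?_⟩
  by_cases hxI : x ∈ I
  · exact Finset.mem_insert_of_mem hxI
  · have : x ∈ J \ I := Finset.mem_sdiff.2 ⟨hx, hxI⟩
    rw [h2, Finset.mem_singleton] at this
    exact this ▸ Finset.mem_insert_self v I

lemma tjseq_sub {I J : Finset V} {ℓ : ℕ} {g : ℕ → Finset V}
    (h : TJSeq G k I J ℓ g) {a b : ℕ} (hab : a ≤ b) (hb : b ≤ ℓ) :
    TJSeq G k (g a) (g b) (b - a) (fun i => g (a + i)) := by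
  obtain ⟨h0, hl, hinv, hstep⟩ := h
  refine ⟨by simp, by simp [Nat.add_sub_cancel' hab], fun i hi => ?_, fun i hi => ?_⟩
  · exact hinv _ (by omega)
  · have := hstep (a + i) (by omega)
    simpa [Nat.add_assoc] using this

lemma tjseq_concat {I M J : Finset V} {ℓ1 ℓ2 : ℕ} {g1 g2 : ℕ → Finset V}
    (h1 : TJSeq G k I M ℓ1 g1) (h2 : TJSeq G k M J ℓ2 g2) :
    TJSeq G k I J (ℓ1 + ℓ2) (fun i => if i < ℓ1 then g1 i else g2 (i - ℓ1)) := by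
  obtain ⟨h10, h1l, h1inv, h1step⟩ := h1
  obtain ⟨h20, h2l, h2inv, h2step⟩ := h2
  have key : ∀ i, i ≤ ℓ1 + ℓ2 → (if i < ℓ1 then g1 i else g2 (i - ℓ1)) =
      (if i ≤ ℓ1 then g1 i else g2 (i - ℓ1)) := by
    intro i _
    rcases lt_trichotomy i ℓ1 with h | h | h
    · simp [h, le_of_lt h]
    · subst h; simp [h20, h1l]
    · simp [not_lt_of_gt h, not_le_of_gt h]
  refine ⟨?_, ?_, fun i hi => ?_, fun i hi => ?_⟩
  · by_cases h : 0 < ℓ1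
    · simp [h, h10]
    · have : ℓ1 = 0 := by omega
      subst this; simp [h20, ← h1l, h10]
  · have h : ¬ (ℓ1 + ℓ2 < ℓ1) := by omega
    dsimp only
    rw [if_neg h, Nat.add_sub_cancel_left, h2l]
  · dsimp only
    rw [key i hi]
    by_cases h : i ≤ ℓ1
    · rw [if_pos h]; exact h1inv _ h
    · rw [if_neg h]; exact h2inv _ (by omega)
  · dsimp only
    rcases lt_trichotomy (i + 1) ℓ1 with h | h | h
    · rw [if_pos (by omega : i < ℓ1), if_pos h]
      exact h1step i (by omega)
    · rw [if_pos (by omega : i < ℓ1), if_neg (by omega : ¬ i + 1 < ℓ1)]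
      have e : i + 1 - ℓ1 = 0 := by omega
      rw [e, h20, ← h1l, ← h]
      exact h1step i (by omega)
    · rw [if_neg (by omega : ¬ i < ℓ1), if_neg (by omega : ¬ i + 1 < ℓ1)]
      have h' : i + 1 - ℓ1 = (i - ℓ1) + 1 := by omega
      rw [h']
      exact h2step _ (by omega)

lemma tjseq_reverse {I J : Finset V} {ℓ : ℕ} {g : ℕ → Finset V}
    (h : TJSeq G k I J ℓ g) : TJSeq G k J I ℓ (fun i => g (ℓ - i)) := by
  obtain ⟨h0, hl, hinv, hstep⟩ := h
  refine ⟨by simp [hl], by simp [h0], fun i hi => hinv _ (by omega), fun i hi => ?_⟩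
  have e1 : ℓ - i = (ℓ - (i + 1)) + 1 := by omega
  have := tjstep_symm (hstep (ℓ - (i + 1)) (by omega))
  simpa [← e1] using this

lemma tjseq_cons {I J : Finset V} {ℓ : ℕ} {g : ℕ → Finset V}
    (hI : IsIndepFinset G I) (hIc : I.card = k) (hs : TJStep I (g 0))
    (h : TJSeq G k (g 0) J ℓ g) :
    TJSeq G k I J (ℓ + 1) (fun i => if i = 0 then I else g (i - 1)) := by
  obtain ⟨_, hl, hinv, hstep⟩ := h
  refine ⟨by simp, by simp [hl], fun i hi => ?_, fun i hi => ?_⟩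
  · by_cases h0 : i = 0
    · simp [h0, hI, hIc]
    · simp only [if_neg h0]; exact hinv _ (by omega)
  · by_cases h0 : i = 0
    · subst h0; simpa using hs
    · simp only [if_neg h0, if_neg (by omega : ¬ i + 1 = 0)]
      have e : i + 1 - 1 = (i - 1) + 1 := by omega
      rw [e]
      exact hstep _ (by omega)
end Basic

section Park
variable {V : Type*} [DecidableEq V] {G : SimpleGraph V} {k : ℕ}

lemma tjstep_swap {X P : Finset V} {x q : V} (hx : x ∈ X) (hqX : q ∉ X) (hqP : q ∉ P)
    (hxP : x ∉ P) :
    TJStep (X ∪ P) ((X.erase x) ∪ (insert q P)) := by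
  refine ⟨x, q, Finset.mem_union_left _ hx, by simp [hqX, hqP], ?_, ?_⟩
  · ext y
    simp only [Finset.mem_sdiff, Finset.mem_union, Finset.mem_erase, Finset.mem_insert,
      Finset.mem_singleton]
    constructor
    · rintro ⟨hy1, hy2⟩
      by_contra hne
      rcases hy1 with h | h
      · exact hy2 (Or.inl ⟨hne, h⟩)
      · exact hy2 (Or.inr (Or.inr h))
    · rintro rfl
      exact ⟨Or.inl hx, by rintro (⟨h, _⟩ | (rfl | h)) <;> simp_all⟩
  · ext y
    simp only [Finset.mem_sdiff, Finset.mem_union, Finset.mem_erase, Finset.mem_insert,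
      Finset.mem_singleton]
    constructor
    · rintro ⟨hy1, hy2⟩
      rcases hy1 with ⟨_, h⟩ | (rfl | h)
      · exact absurd (Or.inl h) hy2
      · rfl
      · exact absurd (Or.inr h) hy2
    · rintro rfl
      exact ⟨Or.inr (Or.inl rfl), by rintro (h | h) <;> simp_all⟩

lemma park_aux : ∀ (n : ℕ) (X Qr P : Finset V), X.card = n → Qr.card = n →
    Disjoint X Qr → Disjoint X P → Disjoint Qr P →
    IsIndepFinset G (X ∪ P) → IsIndepFinset G (Qr ∪ P) →
    (∀ q ∈ Qr, ∀ x ∈ X, ¬ G.Adj q x) →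
    ∃ g, TJSeq G (n + P.card) (X ∪ P) (Qr ∪ P) n g := by
  intro n
  induction n with
  | zero =>
    intro X Qr P hX hQr _ _ _ hIXP _ _
    have hX0 : X = ∅ := Finset.card_eq_zero.1 hX
    have hQ0 : Qr = ∅ := Finset.card_eq_zero.1 hQr
    subst hX0; subst hQ0
    refine ⟨fun _ => ∅ ∪ P, rfl, rfl, fun i _ => ?_, fun i hi => absurd hi (by omega)⟩
    constructor
    · exact hIXP
    · simp
  | succ n ih =>
    intro X Qr P hX hQr hdXQ hdXP hdQP hIXP hIQP hadj
    obtain ⟨x, hx⟩ := (Finset.card_pos.1 (by rw [hX]; omega)).exists_mem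
    obtain ⟨q, hq⟩ := (Finset.card_pos.1 (by rw [hQr]; omega)).exists_mem
    have hqX : q ∉ X := fun h => (Finset.disjoint_left.1 hdXQ h hq)
    have hqP : q ∉ P := Finset.disjoint_left.1 hdQP hq
    have hxP : x ∉ P := Finset.disjoint_left.1 hdXP hx
    have hstep := tjstep_swap (X := X) (P := P) hx hqX hqP hxP
    have hJsub : ∀ c ∈ X.erase x ∪ insert q P, c = q ∨ c ∈ X ∪ P := by
      intro c hc
      rcases Finset.mem_union.1 hc with h | h
      · exact Or.inr (Finset.mem_union_left _ (Finset.mem_of_mem_erase h))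
      · rcases Finset.mem_insert.1 h with rfl | h
        · exact Or.inl rfl
        · exact Or.inr (Finset.mem_union_right _ h)
    have hIJ : IsIndepFinset G ((X.erase x) ∪ (insert q P)) := by
      intro a ha b hb hadj'
      rcases hJsub a ha with rfl | haXP
      · rcases hJsub b hb with rfl | hbXP
        · exact G.irrefl hadj'
        · rcases Finset.mem_union.1 hbXP with h | h
          · exact hadj a hq b h hadj'
          · exact hIQP a (Finset.mem_union_left _ hq) b (Finset.mem_union_right _ h) hadj'
      · rcases hJsub b hb with rfl | hbXP
        · rcases Finset.mem_union.1 haXP with h | h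
          · exact hadj b hq a h hadj'.symm
          · exact hIQP b (Finset.mem_union_left _ hq) a (Finset.mem_union_right _ h) hadj'.symm
        · exact hIXP a haXP b hbXP hadj'
    obtain ⟨g, hg⟩ := ih (X.erase x) (Qr.erase q) (insert q P)
      (by rw [Finset.card_erase_of_mem hx, hX]; rfl)
      (by rw [Finset.card_erase_of_mem hq, hQr]; rfl)
      (Finset.disjoint_of_subset_left (Finset.erase_subset _ _)
        (Finset.disjoint_of_subset_right (Finset.erase_subset _ _) hdXQ))
      (by
        rw [Finset.disjoint_insert_right]
        exact ⟨by simp [hqX], Finset.disjoint_of_subset_left (Finset.erase_subset _ _) hdXP⟩)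
      (by
        rw [Finset.disjoint_insert_right]
        exact ⟨Finset.notMem_erase _ _,
          Finset.disjoint_of_subset_left (Finset.erase_subset _ _) hdQP⟩)
      hIJ
      (by
        have : Qr.erase q ∪ insert q P ⊆ Qr ∪ P := by
          intro y hy
          simp only [Finset.mem_union, Finset.mem_erase, Finset.mem_insert] at hy ⊢
          rcases hy with ⟨_, h⟩ | (rfl | h) <;> tauto
        exact indep_subset hIQP this)
      (fun q' hq' x' hx' => hadj q' (Finset.mem_of_mem_erase hq') x' (Finset.mem_of_mem_erase hx'))
    have hPcard : (insert q P).card = P.card + 1 := Finset.card_insert_of_notMem hqP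
    rw [hPcard] at hg
    have hfinal : Qr.erase q ∪ insert q P = Qr ∪ P := by
      ext y
      simp only [Finset.mem_union, Finset.mem_erase, Finset.mem_insert]
      constructor
      · rintro (⟨_, h⟩ | (rfl | h)) <;> tauto
      · rintro (h | h)
        · by_cases hyq : y = q <;> tauto
        · tauto
    rw [hfinal] at hg
    have h0 : g 0 = (X.erase x) ∪ (insert q P) := hg.1
    have hIcard : (X ∪ P).card = n + 1 + P.card := by
      rw [Finset.card_union_of_disjoint hdXP, hX]
    have hk' : n + (P.card + 1) = n + 1 + P.card := by omega
    rw [hk'] at hg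
    have hg' : TJSeq G (n + 1 + P.card) (g 0) (Qr ∪ P) n g := by rw [h0]; exact hg
    have hs' : TJStep (X ∪ P) (g 0) := by rw [h0]; exact hstep
    exact ⟨_, tjseq_cons hIXP hIcard hs' hg'⟩
end Park

section Park2
variable {V : Type*} [DecidableEq V] {G : SimpleGraph V} {k : ℕ}

lemma park {X Q : Finset V} {u : V} (hX : IsIndepFinset G X) (hQ : IsIndepFinset G Q)
    (hXc : X.card = k) (hQc : Q.card = k) (hd : Disjoint X Q)
    (hadj : ∀ q ∈ Q, ∀ x ∈ X, x ≠ u → ¬ G.Adj q x) :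
    ∃ g, TJSeq G k X Q k g := by
  by_cases hu : u ∈ X
  · -- move u first
    obtain ⟨k', rfl⟩ : ∃ k', k = k' + 1 := ⟨k - 1, by have := Finset.card_pos.2 ⟨u, hu⟩; omega⟩
    obtain ⟨q0, hq0⟩ := (Finset.card_pos.1 (by rw [hQc]; omega)).exists_mem
    have hq0X : q0 ∉ X := Finset.disjoint_right.1 hd hq0
    have huQ : u ∉ Q := Finset.disjoint_left.1 hd hu
    have hstep : TJStep X (X.erase u ∪ insert q0 ∅) := by
      have := tjstep_swap (X := X) (P := (∅ : Finset V)) hu hq0X (Finset.notMem_empty _)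
        (Finset.notMem_empty _)
      simpa using this
    have hIJ : IsIndepFinset G (X.erase u ∪ insert q0 ∅) := by
      intro a ha b hb hadj'
      simp only [Finset.mem_union, Finset.mem_erase, LawfulSingleton.insert_empty_eq,
        Finset.mem_singleton] at ha hb
      rcases ha with ⟨hau, haX⟩ | rfl
      · rcases hb with ⟨hbu, hbX⟩ | rfl
        · exact hX a haX b hbX hadj'
        · exact hadj b hq0 a haX hau hadj'.symm
      · rcases hb with ⟨hbu, hbX⟩ | rfl
        · exact hadj a hq0 b hbX hbu hadj'
        · exact G.irrefl hadj'
    obtain ⟨g, hg⟩ := park_aux (G := G) k' (X.erase u) (Q.erase q0) (insert q0 ∅)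
      (by rw [Finset.card_erase_of_mem hu, hXc]; rfl)
      (by rw [Finset.card_erase_of_mem hq0, hQc]; rfl)
      (Finset.disjoint_of_subset_left (Finset.erase_subset _ _)
        (Finset.disjoint_of_subset_right (Finset.erase_subset _ _) hd))
      (by
        simp only [LawfulSingleton.insert_empty_eq, Finset.disjoint_singleton_right]
        exact fun h => hq0X (Finset.mem_of_mem_erase h))
      (by
        simp only [LawfulSingleton.insert_empty_eq, Finset.disjoint_singleton_right]
        exact Finset.notMem_erase _ _)
      hIJ
      (by
        refine indep_subset hQ ?_
        intro y hy
        simp only [Finset.mem_union, Finset.mem_erase, LawfulSingleton.insert_empty_eq,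
          Finset.mem_singleton] at hy
        rcases hy with ⟨_, h⟩ | rfl
        · exact h
        · exact hq0)
      (fun q' hq' x' hx' => hadj q' (Finset.mem_of_mem_erase hq') x' (Finset.mem_of_mem_erase hx')
        (Finset.ne_of_mem_erase hx'))
    have hcard1 : (insert q0 (∅ : Finset V)).card = 1 := by simp
    rw [hcard1] at hg
    have hfinal : Q.erase q0 ∪ insert q0 ∅ = Q := by
      ext y
      simp only [Finset.mem_union, Finset.mem_erase, LawfulSingleton.insert_empty_eq,
        Finset.mem_singleton]
      constructor
      · rintro (⟨_, h⟩ | rfl)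
        · exact h
        · exact hq0
      · intro h
        by_cases hyq : y = q0 <;> tauto
    rw [hfinal] at hg
    have h0 : g 0 = X.erase u ∪ insert q0 ∅ := hg.1
    have hg' : TJSeq G (k' + 1) (g 0) Q k' g := by rw [h0]; exact hg
    have hs' : TJStep X (g 0) := by rw [h0]; exact hstep
    exact ⟨_, tjseq_cons hX hXc hs' hg'⟩
  · obtain ⟨g, hg⟩ := park_aux (G := G) k X Q ∅ hXc hQc hd (Finset.disjoint_empty_right _)
      (Finset.disjoint_empty_right _) (by simpa using hX) (by simpa using hQ)
      (fun q hq x hx => hadj q hq x hx (fun h => hu (h ▸ hx)))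
    simp only [Finset.union_empty, Finset.card_empty, Nat.add_zero] at hg
    exact ⟨g, hg⟩

lemma two_k_path {X Y Q : Finset V} {u : V}
    (hX : IsIndepFinset G X) (hY : IsIndepFinset G Y) (hQ : IsIndepFinset G Q)
    (hXc : X.card = k) (hYc : Y.card = k) (hQc : Q.card = k)
    (hdX : Disjoint X Q) (hdY : Disjoint Y Q)
    (hadjX : ∀ q ∈ Q, ∀ x ∈ X, x ≠ u → ¬ G.Adj q x)
    (hadjY : ∀ q ∈ Q, ∀ y ∈ Y, y ≠ u → ¬ G.Adj q y) :
    ∃ g, TJSeq G k X Y (k + k) g := by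
  obtain ⟨g1, hg1⟩ := park (u := u) hX hQ hXc hQc hdX hadjX
  obtain ⟨g2, hg2⟩ := park (u := u) hY hQ hYc hQc hdY hadjY
  exact ⟨_, tjseq_concat hg1 (tjseq_reverse hg2)⟩
end Park2

section Ramsey
variable {V : Type*} [DecidableEq V]

lemma choose_le_two_pow (n r : ℕ) : n.choose r ≤ 2 ^ n := by
  rcases le_or_gt r n with h | h
  · calc n.choose r ≤ ∑ m ∈ Finset.range (n + 1), n.choose m :=
        Finset.single_le_sum (fun _ _ => Nat.zero_le _) (Finset.mem_range.2 (by omega))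
      _ = 2 ^ n := Nat.sum_range_choose n
  · rw [Nat.choose_eq_zero_of_lt h]; exact Nat.zero_le _

lemma ramsey_finset (G : SimpleGraph V) : ∀ (a b : ℕ) (s : Finset V),
    (a + b).choose a ≤ s.card →
    (∃ c ⊆ s, c.card = a ∧ ∀ x ∈ c, ∀ y ∈ c, x ≠ y → G.Adj x y) ∨
    (∃ c ⊆ s, c.card = b ∧ IsIndepFinset G c) := by
  intro a
  induction a with
  | zero =>
    intro b s _
    exact Or.inl ⟨∅, Finset.empty_subset _, Finset.card_empty, by simp⟩
  | succ a iha =>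
    intro b
    induction b with
    | zero =>
      intro s _
      exact Or.inr ⟨∅, Finset.empty_subset _, Finset.card_empty, by simp [IsIndepFinset]⟩
    | succ b ihb =>
      intro s hs
      classical
      have hpos : 0 < s.card := by
        have : 0 < (a + 1 + (b + 1)).choose (a + 1) :=
          Nat.choose_pos (by omega)
        omega
      obtain ⟨v, hv⟩ := Finset.card_pos.1 hpos
      set s' := s.erase v with hs'
      set nb := s'.filter (fun x => G.Adj v x) with hnb
      set nnb := s'.filter (fun x => ¬ G.Adj v x) with hnnb
      have hsplit : nb.card + nnb.card = s.card - 1 := by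
        have h1 : nb.card + nnb.card = s'.card :=
          Finset.card_filter_add_card_filter_not (fun x => G.Adj v x)
        rw [hs', Finset.card_erase_of_mem hv] at h1
        exact h1
      have hP : (a + 1 + (b + 1)).choose (a + 1)
          = (a + (b + 1)).choose a + (a + 1 + b).choose (a + 1) := by
        have e1 : a + 1 + (b + 1) = (a + 1 + b) + 1 := by omega
        have e2 : a + 1 + b = a + (b + 1) := by omega
        rw [e1, Nat.choose_succ_succ (a + 1 + b) a, e2]
      have hcases : (a + (b + 1)).choose a ≤ nb.card ∨ (a + 1 + b).choose (a + 1) ≤ nnb.card := by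
        by_contra hcon
        push_neg at hcon
        omega
      rcases hcases with h | h
      · rcases iha (b + 1) nb h with ⟨c, hcs, hcc, hcl⟩ | ⟨c, hcs, hcc, hci⟩
        · refine Or.inl ⟨insert v c, ?_, ?_, ?_⟩
          · intro y hy
            rcases Finset.mem_insert.1 hy with rfl | hy
            · exact hv
            · exact Finset.erase_subset _ _ (Finset.filter_subset _ _ (hcs hy))
          · rw [Finset.card_insert_of_notMem, hcc]
            intro hvc
            have := hcs hvc
            rw [hnb] at this
            exact Finset.notMem_erase v s (Finset.filter_subset _ _ this)
          · intro x hx y hy hxy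
            rcases Finset.mem_insert.1 hx with hx' | hx'
            · rcases Finset.mem_insert.1 hy with hy' | hy'
              · exact absurd (hx'.trans hy'.symm) hxy
              · subst hx'; exact (Finset.mem_filter.1 (hcs hy')).2
            · rcases Finset.mem_insert.1 hy with hy' | hy'
              · subst hy'; exact ((Finset.mem_filter.1 (hcs hx')).2).symm
              · exact hcl x hx' y hy' hxy
        · exact Or.inr ⟨c, fun y hy => Finset.erase_subset _ _ (Finset.filter_subset _ _ (hcs hy)),
            hcc, hci⟩
      · rcases ihb nnb h with ⟨c, hcs, hcc, hcl⟩ | ⟨c, hcs, hcc, hci⟩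
        · exact Or.inl ⟨c, fun y hy => Finset.erase_subset _ _ (Finset.filter_subset _ _ (hcs hy)),
            hcc, hcl⟩
        · refine Or.inr ⟨insert v c, ?_, ?_, ?_⟩
          · intro y hy
            rcases Finset.mem_insert.1 hy with rfl | hy
            · exact hv
            · exact Finset.erase_subset _ _ (Finset.filter_subset _ _ (hcs hy))
          · rw [Finset.card_insert_of_notMem, hcc]
            intro hvc
            have := hcs hvc
            rw [hnnb] at this
            exact Finset.notMem_erase v s (Finset.filter_subset _ _ this)
          · intro x hx y hy hadj
            rcases Finset.mem_insert.1 hx with hx' | hx'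
            · rcases Finset.mem_insert.1 hy with hy' | hy'
              · rw [hx', hy'] at hadj; exact G.irrefl hadj
              · subst hx'; exact (Finset.mem_filter.1 (hcs hy')).2 hadj
            · rcases Finset.mem_insert.1 hy with hy' | hy'
              · subst hy'; exact (Finset.mem_filter.1 (hcs hx')).2 hadj.symm
              · exact hci x hx' y hy' hadj
end Ramsey

section Helpers
variable {V : Type*} [DecidableEq V] {G : SimpleGraph V} {t k : ℕ}

lemma clique_to_kpq (hK : ¬ ContainsKpq G 3 t) {c : Finset V} (hc : c.card = t + 3)
    (hcl : ∀ x ∈ c, ∀ y ∈ c, x ≠ y → G.Adj x y) : False := by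
  obtain ⟨X, hXc, hX3⟩ := Finset.exists_subset_card_eq (show 3 ≤ c.card by omega)
  refine hK ⟨X, c \ X, Finset.disjoint_sdiff, hX3, ?_, ?_⟩
  · rw [Finset.card_sdiff_of_subset hXc, hc, hX3]; omega
  · intro x hx y hy
    have hyX : y ∉ X := (Finset.mem_sdiff.1 hy).2
    exact hcl x (hXc hx) y (Finset.sdiff_subset hy) (fun h => hyX (h ▸ hx))

lemma triple_common_bound (hK : ¬ ContainsKpq G 3 t) {S F : Finset V} (hS : S.card = 3)
    (hF : ∀ v ∈ F, ∀ x ∈ S, G.Adj v x) : F.card ≤ t - 1 := by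
  by_contra h
  push_neg at h
  have ht' : t ≤ F.card := by omega
  obtain ⟨Y, hYF, hYt⟩ := Finset.exists_subset_card_eq ht'
  refine hK ⟨S, Y, ?_, hS, hYt, ?_⟩
  · rw [Finset.disjoint_left]
    intro x hxS hxY
    exact G.irrefl (hF x (hYF hxY) x hxS)
  · exact fun x hx y hy => (hF y (hYF hy) x hx).symm

lemma pair_common_bound (hK : ¬ ContainsKpq G 3 t) {u w z : V} (huw : u ≠ w)
    {Q : Finset V} (hQadj : ∀ q ∈ Q, G.Adj q u ∧ G.Adj q w)
    (hQind : IsIndepFinset G Q)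
    (huQ : u ∉ Q) (hwQ : w ∉ Q) (hz1 : z ≠ u) (hz2 : z ≠ w)
    [DecidablePred (fun q => G.Adj z q)] :
    (Q.filter (fun q => G.Adj z q)).card ≤ t - 1 := by
  by_cases hzQ : z ∈ Q
  · have : Q.filter (fun q => G.Adj z q) = ∅ := by
      rw [Finset.filter_eq_empty_iff]
      exact fun {q} hq hadj => hQind z hzQ q hq hadj
    simp [this]
  · by_contra h
    push_neg at h
    have ht' : t ≤ (Q.filter (fun q => G.Adj z q)).card := by omega
    obtain ⟨Y, hYF, hYt⟩ := Finset.exists_subset_card_eq ht'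
    have hYQ : ∀ y ∈ Y, y ∈ Q ∧ G.Adj z y := by
      intro y hy
      have := hYF hy
      exact ⟨Finset.filter_subset _ _ this, (Finset.mem_filter.1 this).2⟩
    refine hK ⟨{u, w, z}, Y, ?_, ?_, hYt, ?_⟩
    · rw [Finset.disjoint_left]
      intro x hx hxY
      have hxQ := (hYQ x hxY).1
      rcases Finset.mem_insert.1 hx with rfl | hx
      · exact huQ hxQ
      · rcases Finset.mem_insert.1 hx with rfl | hx
        · exact hwQ hxQ
        · rw [Finset.mem_singleton] at hx
          exact hzQ (hx ▸ hxQ)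
    · rw [Finset.card_insert_of_notMem, Finset.card_insert_of_notMem, Finset.card_singleton]
      · simp [hz2.symm]
      · simp [huw, hz1.symm]
    · intro x hx y hy
      rcases Finset.mem_insert.1 hx with rfl | hx
      · exact ((hQadj y (hYQ y hy).1).1).symm
      · rcases Finset.mem_insert.1 hx with rfl | hx
        · exact ((hQadj y (hYQ y hy).1).2).symm
        · rw [Finset.mem_singleton] at hx
          subst hx
          exact (hYQ y hy).2

lemma tjseq_window_card {I J : Finset V} {ℓ : ℕ} {g : ℕ → Finset V}
    (h : TJSeq G k I J ℓ g) {a : ℕ} : ∀ d, a + d ≤ ℓ →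
    ((Finset.Icc a (a + d)).biUnion g).card ≤ k + d := by
  intro d
  induction d with
  | zero =>
    intro hd
    simp only [Nat.add_zero, Finset.Icc_self, Finset.singleton_biUnion]
    exact le_of_eq (h.2.2.1 a hd).2
  | succ d ihd =>
    intro hd
    have e : Finset.Icc a (a + (d + 1)) = insert (a + d + 1) (Finset.Icc a (a + d)) := by
      ext x
      simp only [Finset.mem_Icc, Finset.mem_insert]
      omega
    rw [e, Finset.biUnion_insert]
    obtain ⟨v, hv⟩ := tjstep_subset (h.2.2.2 (a + d) (by omega))
    have hsub : g (a + d + 1) ∪ (Finset.Icc a (a + d)).biUnion g ⊆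
        insert v ((Finset.Icc a (a + d)).biUnion g) := by
      intro y hy
      rcases Finset.mem_union.1 hy with hy | hy
      · rcases Finset.mem_insert.1 (hv hy) with rfl | hy'
        · exact Finset.mem_insert_self _ _
        · refine Finset.mem_insert_of_mem (Finset.mem_biUnion.2 ⟨a + d, ?_, hy'⟩)
          rw [Finset.mem_Icc]; omega
      · exact Finset.mem_insert_of_mem hy
    calc (g (a + d + 1) ∪ (Finset.Icc a (a + d)).biUnion g).card
        ≤ (insert v ((Finset.Icc a (a + d)).biUnion g)).card := Finset.card_le_card hsub
      _ ≤ ((Finset.Icc a (a + d)).biUnion g).card + 1 := Finset.card_insert_le _ _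
      _ ≤ k + d + 1 := by have := ihd (by omega); omega
end Helpers

/-- kernelization preserving the shortest length of a
reconfiguration sequence for `K_{3,t}`-forbidden graphs. -/
theorem k3t_kernel_shortest_exists (t : ℕ) (ht : 3 ≤ t) :
    ∃ f : ℕ → ℕ,
      ∀ (V : Type) [Fintype V] [DecidableEq V] (G : SimpleGraph V),
        ¬ ContainsKpq G 3 t →
        ∀ (k : ℕ) (I0 Ir : Finset V),
          IsIndepFinset G I0 → IsIndepFinset G Ir →
          I0.card = k → Ir.card = k →
          TJReachable G k I0 Ir →
          ∃ V' : Finset V, I0 ∪ Ir ⊆ V' ∧ V'.card ≤ f k ∧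
            sInf {ℓ : ℕ | ∃ g : ℕ → Finset V,
                TJSeq G k I0 Ir ℓ g ∧ ∀ i ≤ ℓ, g i ⊆ V'} =
            sInf {ℓ : ℕ | ∃ g : ℕ → Finset V, TJSeq G k I0 Ir ℓ g} := by
  refine ⟨fun k => k + (2*k + (2*k + 2^(2*k)*t +
      2^(2*k)*((t + 3 + (2*k*t + 3*k + 1)).choose (t + 3)) + 2).choose k), ?_⟩
  intro V _ _ G hK k I0 Ir hI0 hIr hc0 hcr hreach
  classical
  set D := 2*k*t + 3*k + 1 with hD
  set W := (t + 3 + D).choose (t + 3) with hW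
  set M := 2*k + 2^(2*k)*t + 2^(2*k)*W + 2 with hM
  set F := 2*k + M.choose k with hF
  set Sfull := {ℓ : ℕ | ∃ g : ℕ → Finset V, TJSeq G k I0 Ir ℓ g} with hSfull
  have hne : Sfull.Nonempty := by
    obtain ⟨ℓ, g, h⟩ := hreach
    exact ⟨ℓ, g, h⟩
  set L := sInf Sfull with hL
  obtain ⟨g, hg⟩ : ∃ g, TJSeq G k I0 Ir L g := Nat.sInf_mem hne
  have hmin : ∀ m, (∃ g', TJSeq G k I0 Ir m g') → L ≤ m := fun m hm => Nat.sInf_le hm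
  set U := (Finset.Icc 0 L).biUnion g with hU
  have hsubU : ∀ i ≤ L, g i ⊆ U := by
    intro i hi x hx
    exact Finset.mem_biUnion.2 ⟨i, Finset.mem_Icc.2 ⟨Nat.zero_le _, hi⟩, hx⟩
  -- key bound : L ≤ F
  have hLF : L ≤ F := by
    by_contra hFL
    push_neg at hFL
    -- distinctness of configurations
    have hinj0 : ∀ a b, a < b → b ≤ L → g a ≠ g b := by
      intro a b hab hb heq
      have pre := tjseq_sub hg (Nat.zero_le a) (le_trans (le_of_lt hab) hb)
      have suf := tjseq_sub hg hb le_rfl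
      rw [heq] at pre
      have tot := tjseq_concat pre suf
      rw [hg.1] at tot
      have e2 : g L = Ir := hg.2.1
      rw [e2] at tot
      have : L ≤ a - 0 + (L - b) := hmin _ ⟨_, tot⟩
      omega
    -- counting
    have hcount : L + 1 ≤ U.card.choose k := by
      have hmaps : ∀ i ∈ Finset.Icc 0 L, g i ∈ Finset.powersetCard k U := by
        intro i hi
        rw [Finset.mem_powersetCard]
        exact ⟨hsubU i (Finset.mem_Icc.1 hi).2, (hg.2.2.1 i (Finset.mem_Icc.1 hi).2).2⟩
      have hinj : Set.InjOn g ↑(Finset.Icc 0 L) := by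
        intro a ha b hb heq
        simp only [Finset.coe_Icc, Set.mem_Icc] at ha hb
        rcases Nat.lt_trichotomy a b with h | h | h
        · exact absurd heq (hinj0 a b h hb.2)
        · exact h
        · exact absurd heq.symm (hinj0 b a h ha.2)
      have := Finset.card_le_card_of_injOn g hmaps hinj
      rwa [Nat.card_Icc, Finset.card_powersetCard, Nat.sub_zero] at this
    have hm : M < U.card := by
      by_contra hmM
      push_neg at hmM
      have : U.card.choose k ≤ M.choose k := Nat.choose_le_choose k hmM
      omega
    set A := I0 ∪ Ir with hA
    have hAcard : A.card ≤ 2*k := by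
      rw [hA]
      have := Finset.card_union_le I0 Ir
      omega
    set trace := fun v => A.filter (fun a => G.Adj v a) with htrace
    set good := (U \ A).filter (fun v => (trace v).card ≤ 2) with hgood
    set bad := (U \ A).filter (fun v => ¬ (trace v).card ≤ 2) with hbad
    have hsplit : U.card ≤ 2*k + (bad.card + good.card) := by
      have h1 : good.card + bad.card = (U \ A).card :=
        Finset.card_filter_add_card_filter_not (fun v => (trace v).card ≤ 2)
      have h2 : U.card ≤ A.card + (U \ A).card := by
        have : U ⊆ A ∪ (U \ A) := by
          intro x hx
          by_cases hxA : x ∈ A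
          · exact Finset.mem_union_left _ hxA
          · exact Finset.mem_union_right _ (Finset.mem_sdiff.2 ⟨hx, hxA⟩)
        calc U.card ≤ (A ∪ (U \ A)).card := Finset.card_le_card this
          _ ≤ A.card + (U \ A).card := Finset.card_union_le _ _
      omega
    -- bound on bad
    have hbadcard : bad.card ≤ 2^(2*k) * t := by
      by_contra hb
      push_neg at hb
      have hex3 : ∀ v ∈ bad, ∃ S, S ⊆ trace v ∧ S.card = 3 := by
        intro v hv
        have : ¬ (trace v).card ≤ 2 := (Finset.mem_filter.1 hv).2
        obtain ⟨S, hS1, hS2⟩ := Finset.exists_subset_card_eq (show 3 ≤ (trace v).card by omega)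
        exact ⟨S, hS1, hS2⟩
      have hφ : ∃ φ : V → Finset V, ∀ v ∈ bad, φ v ⊆ trace v ∧ (φ v).card = 3 := by
        refine ⟨fun v => if h : v ∈ bad then (hex3 v h).choose else ∅, fun v hv => ?_⟩
        simp only [dif_pos hv]
        exact (hex3 v hv).choose_spec
      obtain ⟨φ, hφ⟩ := hφ
      have hmaps : ∀ v ∈ bad, φ v ∈ A.powersetCard 3 := by
        intro v hv
        rw [Finset.mem_powersetCard]
        exact ⟨(hφ v hv).1.trans (Finset.filter_subset _ _), (hφ v hv).2⟩
      have hcard3 : (A.powersetCard 3).card * (t - 1) < bad.card := by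
        have h1 : (A.powersetCard 3).card ≤ 2^(2*k) := by
          rw [Finset.card_powersetCard]
          calc A.card.choose 3 ≤ 2 ^ A.card := choose_le_two_pow _ _
            _ ≤ 2^(2*k) := Nat.pow_le_pow_right (by omega) hAcard
        calc (A.powersetCard 3).card * (t - 1) ≤ 2^(2*k) * (t - 1) :=
            Nat.mul_le_mul_right _ h1
          _ ≤ 2^(2*k) * t := Nat.mul_le_mul_left _ (by omega)
          _ < bad.card := hb
      obtain ⟨S, hS, hfib⟩ := Finset.exists_lt_card_fiber_of_mul_lt_card_of_maps_to hmaps hcard3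
      have hSc : S.card = 3 := (Finset.mem_powersetCard.1 hS).2
      have hfibadj : ∀ v ∈ bad.filter (fun x => φ x = S), ∀ x ∈ S, G.Adj v x := by
        intro v hv x hx
        have hv1 := Finset.mem_filter.1 hv
        have := (hφ v hv1.1).1
        rw [hv1.2] at this
        exact (Finset.mem_filter.1 (this hx)).2
      have := triple_common_bound hK hSc hfibadj
      omega
    -- pigeonhole on traces
    have hgoodcard : 2^(2*k) * W < good.card := by
      have hm' : 2*k + 2^(2*k)*t + 2^(2*k)*W + 2 < U.card := by rw [← hM]; exact hm
      omega
    have hmaps : ∀ v ∈ good, trace v ∈ A.powerset := by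
      intro v _
      exact Finset.mem_powerset.2 (Finset.filter_subset _ _)
    have hWcard : A.powerset.card * W < good.card := by
      have h1 : A.powerset.card ≤ 2^(2*k) := by
        rw [Finset.card_powerset]
        exact Nat.pow_le_pow_right (by omega) hAcard
      calc A.powerset.card * W ≤ 2^(2*k) * W := Nat.mul_le_mul_right _ h1
        _ < good.card := hgoodcard
    obtain ⟨T, hTA, hfibT⟩ := Finset.exists_lt_card_fiber_of_mul_lt_card_of_maps_to hmaps hWcard
    set cls := good.filter (fun v => trace v = T) with hcls
    have hclsW : W ≤ cls.card := le_of_lt hfibT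
    -- extract independent set Q of size D
    have hclsprop : ∀ v ∈ cls, v ∈ U ∧ v ∉ A ∧ trace v = T ∧ (trace v).card ≤ 2 := by
      intro v hv
      have h1 := Finset.mem_filter.1 hv
      have h2 := Finset.mem_filter.1 h1.1
      have h3 := Finset.mem_sdiff.1 h2.1
      exact ⟨h3.1, h3.2, h1.2, h2.2⟩
    have hram := ramsey_finset G (t + 3) D cls (by rw [← hW]; exact hclsW)
    rcases hram with ⟨c, _, hcc, hcl⟩ | ⟨Q, hQcls, hQD, hQind⟩
    · exact clique_to_kpq hK hcc hcl
    -- properties of Q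
    have hQU : ∀ q ∈ Q, q ∈ U := fun q hq => (hclsprop q (hQcls hq)).1
    have hQA : ∀ q ∈ Q, q ∉ A := fun q hq => (hclsprop q (hQcls hq)).2.1
    have hQtr : ∀ q ∈ Q, trace q = T := fun q hq => (hclsprop q (hQcls hq)).2.2.1
    have hQne : Q.Nonempty := Finset.card_pos.1 (by rw [hQD]; omega)
    obtain ⟨v0, hv0⟩ := hQne
    have hT2 : T.card ≤ 2 := by
      have := (hclsprop v0 (hQcls hv0)).2.2
      rw [this.1] at this
      exact this.2
    have hTsub : T ⊆ A := Finset.mem_powerset.1 hTA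
    rcases (by omega : T.card ≤ 1 ∨ T.card = 2) with hTc | hTc
    · -- small trace : direct 2k-step sequence
      obtain ⟨u, hTu⟩ : ∃ u, T ⊆ {u} := by
        rcases (by omega : T.card = 0 ∨ T.card = 1) with h | h
        · exact ⟨v0, by rw [Finset.card_eq_zero.1 h]; exact Finset.empty_subset _⟩
        · obtain ⟨u, hu⟩ := Finset.card_eq_one.1 h
          exact ⟨u, by rw [hu]⟩
      obtain ⟨Q', hQ'Q, hQ'k⟩ := Finset.exists_subset_card_eq
        (show k ≤ Q.card by rw [hQD, hD]; omega)
      have hQ'ind := indep_subset hQind hQ'Q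
      have hdisj0 : Disjoint I0 Q' := Finset.disjoint_left.2 (fun {x} hx hxQ =>
        hQA x (hQ'Q hxQ) (by rw [hA]; exact Finset.mem_union_left _ hx))
      have hdisjr : Disjoint Ir Q' := Finset.disjoint_left.2 (fun {x} hx hxQ =>
        hQA x (hQ'Q hxQ) (by rw [hA]; exact Finset.mem_union_right _ hx))
      have hadjX : ∀ q ∈ Q', ∀ x ∈ I0, x ≠ u → ¬ G.Adj q x := by
        intro q hq x hx hxu hadj
        have hxA : x ∈ A := by rw [hA]; exact Finset.mem_union_left _ hx
        have hxT : x ∈ trace q := by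
          simp only [htrace]
          exact Finset.mem_filter.2 ⟨hxA, hadj⟩
        rw [hQtr q (hQ'Q hq)] at hxT
        exact hxu (Finset.mem_singleton.1 (hTu hxT))
      have hadjY : ∀ q ∈ Q', ∀ x ∈ Ir, x ≠ u → ¬ G.Adj q x := by
        intro q hq x hx hxu hadj
        have hxA : x ∈ A := by rw [hA]; exact Finset.mem_union_right _ hx
        have hxT : x ∈ trace q := by
          simp only [htrace]
          exact Finset.mem_filter.2 ⟨hxA, hadj⟩
        rw [hQtr q (hQ'Q hq)] at hxT
        exact hxu (Finset.mem_singleton.1 (hTu hxT))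
      obtain ⟨gg, hgg⟩ := two_k_path (u := u) hI0 hIr hQ'ind hc0 hcr hQ'k
        hdisj0 hdisjr hadjX hadjY
      have hle : L ≤ k + k := hmin _ ⟨gg, hgg⟩
      omega
    · -- trace of size two : window argument
      obtain ⟨u, w, huw, hTuw⟩ := Finset.card_eq_two.1 hTc
      have huA : u ∈ A := hTsub (by rw [hTuw]; exact Finset.mem_insert_self _ _)
      have hwA : w ∈ A := hTsub (by rw [hTuw]; simp)
      have hQadj : ∀ q ∈ Q, G.Adj q u ∧ G.Adj q w := by
        intro q hq
        have h1 : u ∈ trace q := by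
          rw [hQtr q hq, hTuw]; exact Finset.mem_insert_self _ _
        have h2 : w ∈ trace q := by rw [hQtr q hq, hTuw]; simp
        simp only [htrace, Finset.mem_filter] at h1 h2
        exact ⟨h1.2, h2.2⟩
      have huQ : u ∉ Q := fun h => hQA u h huA
      have hwQ : w ∉ Q := fun h => hQA w h hwA
      -- visit times
      have hvisit : ∀ q ∈ Q, ∃ i, i ≤ L ∧ q ∈ g i := by
        intro q hq
        have hqU := hQU q hq
        rw [hU] at hqU
        obtain ⟨i, hi, hqi⟩ := Finset.mem_biUnion.1 hqU
        exact ⟨i, (Finset.mem_Icc.1 hi).2, hqi⟩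
      set τ := fun q => sInf {i | i ≤ L ∧ q ∈ g i} with hτ
      have hτspec : ∀ q ∈ Q, τ q ≤ L ∧ q ∈ g (τ q) := by
        intro q hq
        obtain ⟨i, h1, h2⟩ := hvisit q hq
        exact Nat.sInf_mem (⟨i, h1, h2⟩ : {i | i ≤ L ∧ q ∈ g i}.Nonempty)
      have htne : (Q.image τ).Nonempty := Finset.Nonempty.image ⟨v0, hv0⟩ τ
      obtain ⟨q0, hq0Q, hq0τ⟩ := Finset.mem_image.1 (Finset.min'_mem _ htne)
      obtain ⟨q1, hq1Q, hq1τ⟩ := Finset.mem_image.1 (Finset.max'_mem _ htne)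
      set istar := (Q.image τ).min' htne with histar
      set jstar := (Q.image τ).max' htne with hjstar
      have histarL : istar ≤ L := hq0τ ▸ (hτspec q0 hq0Q).1
      have hjstarL : jstar ≤ L := hq1τ ▸ (hτspec q1 hq1Q).1
      have hij : istar ≤ jstar := Finset.min'_le _ _ (Finset.max'_mem _ htne)
      have hq0g : q0 ∈ g istar := hq0τ ▸ (hτspec q0 hq0Q).2
      have hq1g : q1 ∈ g jstar := hq1τ ▸ (hτspec q1 hq1Q).2
      have hXind := (hg.2.2.1 istar histarL).1
      have hYind := (hg.2.2.1 jstar hjstarL).1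
      have hXcard := (hg.2.2.1 istar histarL).2
      have hYcard := (hg.2.2.1 jstar hjstarL).2
      have hnotu : u ∉ g istar ∪ g jstar ∧ w ∉ g istar ∪ g jstar := by
        constructor
        · intro hcon
          rcases Finset.mem_union.1 hcon with h | h
          · exact hXind q0 hq0g u h (hQadj q0 hq0Q).1
          · exact hYind q1 hq1g u h (hQadj q1 hq1Q).1
        · intro hcon
          rcases Finset.mem_union.1 hcon with h | h
          · exact hXind q0 hq0g w h (hQadj q0 hq0Q).2
          · exact hYind q1 hq1g w h (hQadj q1 hq1Q).2
      -- bounding blocked vertices of Q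
      set XY := g istar ∪ g jstar with hXY
      have hzbound : ∀ z ∈ XY,
          (Q.filter (fun q => G.Adj z q)).card ≤ t - 1 := by
        intro z hz
        have hzu : z ≠ u := fun h => hnotu.1 (h ▸ hz)
        have hzw : z ≠ w := fun h => hnotu.2 (h ▸ hz)
        exact pair_common_bound hK huw hQadj hQind huQ hwQ hzu hzw
      set Qbad := Q.filter (fun q => q ∈ XY ∨ ∃ z ∈ XY, G.Adj z q) with hQbad
      have hXYcard : XY.card ≤ 2*k := by
        rw [hXY]
        calc (g istar ∪ g jstar).card ≤ (g istar).card + (g jstar).card :=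
            Finset.card_union_le _ _
          _ ≤ 2*k := by omega
      have hQbadcard : Qbad.card ≤ 2*k + 2*k*(t-1) := by
        have hsub : Qbad ⊆ XY ∪ XY.biUnion (fun z => Q.filter (fun q => G.Adj z q)) := by
          intro q hq
          have h1 := Finset.mem_filter.1 hq
          rcases h1.2 with h | ⟨z, hz, hadj⟩
          · exact Finset.mem_union_left _ h
          · exact Finset.mem_union_right _
              (Finset.mem_biUnion.2 ⟨z, hz, Finset.mem_filter.2 ⟨h1.1, hadj⟩⟩)
        have hb1 : (XY.biUnion (fun z => Q.filter (fun q => G.Adj z q))).card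
            ≤ XY.card * (t-1) := by
          calc (XY.biUnion (fun z => Q.filter (fun q => G.Adj z q))).card
              ≤ ∑ z ∈ XY, (Q.filter (fun q => G.Adj z q)).card := Finset.card_biUnion_le
            _ ≤ XY.card * (t-1) := by
                have := Finset.sum_le_card_nsmul XY
                  (fun z => (Q.filter (fun q => G.Adj z q)).card) (t-1)
                  (fun z hz => hzbound z hz)
                simpa [smul_eq_mul] using this
        calc Qbad.card ≤ (XY ∪ XY.biUnion (fun z => Q.filter (fun q => G.Adj z q))).card :=
            Finset.card_le_card hsub
          _ ≤ XY.card + (XY.biUnion (fun z => Q.filter (fun q => G.Adj z q))).card :=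
            Finset.card_union_le _ _
          _ ≤ 2*k + XY.card * (t-1) := by omega
          _ ≤ 2*k + 2*k*(t-1) := by
              have := Nat.mul_le_mul_right (t-1) hXYcard
              omega
      have hsplitmul : 2*k + 2*k*(t-1) = 2*k*t := by
        have ht1 : t - 1 + 1 = t := by omega
        calc 2*k + 2*k*(t-1) = 2*k*((t-1)+1) := by ring
          _ = 2*k*t := by rw [ht1]
      have hQfreecard : k ≤ (Q \ Qbad).card := by
        have h1 : Q.card - Qbad.card ≤ (Q \ Qbad).card := Finset.le_card_sdiff _ _
        have h2 : Q.card = D := hQD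
        rw [hD] at h2
        omega
      obtain ⟨Q', hQ'sub, hQ'k⟩ := Finset.exists_subset_card_eq hQfreecard
      have hQ'Q : Q' ⊆ Q := hQ'sub.trans Finset.sdiff_subset
      have hQ'free : ∀ q ∈ Q', q ∉ XY ∧ ∀ z ∈ XY, ¬ G.Adj z q := by
        intro q hq
        have h1 := hQ'sub hq
        have h2 := (Finset.mem_sdiff.1 h1).2
        have h3 : ¬(q ∈ XY ∨ ∃ z ∈ XY, G.Adj z q) := by
          intro hcon
          exact h2 (by rw [hQbad]; exact Finset.mem_filter.2 ⟨(Finset.mem_sdiff.1 h1).1, hcon⟩)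
        push_neg at h3
        exact h3
      have hdX : Disjoint (g istar) Q' := Finset.disjoint_left.2 (fun {x} hx hxQ =>
        (hQ'free x hxQ).1 (by rw [hXY]; exact Finset.mem_union_left _ hx))
      have hdY : Disjoint (g jstar) Q' := Finset.disjoint_left.2 (fun {x} hx hxQ =>
        (hQ'free x hxQ).1 (by rw [hXY]; exact Finset.mem_union_right _ hx))
      have hadjX : ∀ q ∈ Q', ∀ x ∈ g istar, x ≠ u → ¬ G.Adj q x := by
        intro q hq x hx _ hadj
        exact (hQ'free q hq).2 x (by rw [hXY]; exact Finset.mem_union_left _ hx) hadj.symm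
      have hadjY : ∀ q ∈ Q', ∀ x ∈ g jstar, x ≠ u → ¬ G.Adj q x := by
        intro q hq x hx _ hadj
        exact (hQ'free q hq).2 x (by rw [hXY]; exact Finset.mem_union_right _ hx) hadj.symm
      obtain ⟨gsc, hgsc⟩ := two_k_path (u := u) hXind hYind (indep_subset hQind hQ'Q)
        hXcard hYcard hQ'k hdX hdY hadjX hadjY
      have hwin : jstar - istar ≤ k + k := by
        by_contra hcon
        push_neg at hcon
        have pre := tjseq_sub hg (Nat.zero_le istar) histarL
        have suf := tjseq_sub hg hjstarL le_rfl
        have tot := tjseq_concat pre (tjseq_concat hgsc suf)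
        simp only [Nat.zero_add] at tot
        rw [hg.1, hg.2.1] at tot
        have := hmin _ ⟨_, tot⟩
        omega
      have hQO : Q ⊆ (Finset.Icc istar jstar).biUnion g := by
        intro q hq
        refine Finset.mem_biUnion.2 ⟨τ q, ?_, (hτspec q hq).2⟩
        rw [Finset.mem_Icc]
        constructor
        · exact Finset.min'_le _ _ (Finset.mem_image_of_mem τ hq)
        · exact Finset.le_max' _ _ (Finset.mem_image_of_mem τ hq)
      have hOcard : ((Finset.Icc istar jstar).biUnion g).card ≤ k + (jstar - istar) := by
        have h1 := tjseq_window_card hg (a := istar) (jstar - istar) (by omega)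
        rw [Nat.add_sub_cancel' hij] at h1
        exact h1
      have hQcard_le : D ≤ k + (jstar - istar) := by
        rw [← hQD]
        calc Q.card ≤ ((Finset.Icc istar jstar).biUnion g).card := Finset.card_le_card hQO
          _ ≤ k + (jstar - istar) := hOcard
      rw [hD] at hQcard_le
      omega
  -- conclusion
  have hI0U : I0 ⊆ U := by rw [← hg.1]; exact hsubU 0 (Nat.zero_le _)
  have hIrU : Ir ⊆ U := by rw [← hg.2.1]; exact hsubU L le_rfl
  refine ⟨U, Finset.union_subset hI0U hIrU, ?_, ?_⟩
  · show U.card ≤ k + F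
    have h1 := tjseq_window_card hg (a := 0) L (by omega)
    simp only [Nat.zero_add] at h1
    rw [← hU] at h1
    omega
  · show sInf {ℓ : ℕ | ∃ g' : ℕ → Finset V,
        TJSeq G k I0 Ir ℓ g' ∧ ∀ i ≤ ℓ, g' i ⊆ U} = L
    set Srestr := {ℓ : ℕ | ∃ g' : ℕ → Finset V,
        TJSeq G k I0 Ir ℓ g' ∧ ∀ i ≤ ℓ, g' i ⊆ U} with hSrestr
    have h1 : L ∈ Srestr := ⟨g, hg, hsubU⟩
    have h3 : sInf Srestr ∈ Srestr := Nat.sInf_mem ⟨L, h1⟩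
    have h4 : sInf Srestr ∈ Sfull := by
      obtain ⟨g', hg', _⟩ := h3
      exact ⟨g', hg'⟩
    exact le_antisymm (Nat.sInf_le h1) (Nat.sInf_le h4)
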